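/- The family {L ∈ Lin : L embeds into ℤ^γ} is closed under convex sums, for every countable ordinal γ. That is: if K and K' both embed into ℤ^γ, and (K'_k)_{k∈K} is a family of nonempty convex subsets of K' with K'_{k₀} ≤ K'_{k₁} whenever k₀ <_K k₁, then Σ_{k∈K} K'_k embeds into ℤ^γ. -/

import Mathlib

open Set

noncomputable section ZPow

/-- Iterated finite condensation relation. -/
def con {L : Type} [LinearOrder L] (β : Ordinal.{0}) (x y : L) : Prop :=
  x = y ∨ ∃ β' : Set.Iio β, ∃ F : Finset L,
    ∀ z ∈ Set.Icc (min x y) (max x y), ∃ w ∈ F, con β'.1 z w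
termination_by β
decreasing_by exact β'.2

variable {L M : Type} [LinearOrder L] [LinearOrder M]

theorem con_refl (β : Ordinal) (x : L) : con β x x := by rw [con]; exact Or.inl rfl

theorem con_symm {β : Ordinal} {x y : L} (h : con β x y) : con β y x := by
  rw [con] at h ⊢
  rcases h with h | ⟨β', F, hF⟩
  · exact Or.inl h.symm
  · exact Or.inr ⟨β', F, by rwa [min_comm y x, max_comm y x]⟩

theorem con_of_cover {β β' : Ordinal} (hβ : β' < β) {x y : L} (F : Finset L)
    (hF : ∀ z ∈ Set.Icc (min x y) (max x y), ∃ w ∈ F, con β' z w) : con β x y := by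
  rw [con]; exact Or.inr ⟨⟨β', hβ⟩, F, hF⟩

theorem con_mono {β β₂ : Ordinal} (h : β ≤ β₂) {x y : L} (hc : con β x y) : con β₂ x y := by
  rw [con] at hc
  rcases hc with h' | ⟨β', F, hF⟩
  · rw [con]; exact Or.inl h'
  · exact con_of_cover (lt_of_lt_of_le β'.2 h) F hF

/-- From `con β x y` with `0 < β`, extract a cover at some level `β' < β`. -/
theorem exists_cover_of_con {β : Ordinal} (hβ : 0 < β) {x y : L} (hc : con β x y) :
    ∃ β' < β, ∃ F : Finset L, ∀ z ∈ Set.Icc (min x y) (max x y), ∃ w ∈ F, con β' z w := by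
  rw [con] at hc
  rcases hc with h | ⟨β', F, hF⟩
  · subst h
    exact ⟨0, hβ, {x}, fun z hz => ⟨x, Finset.mem_singleton_self x, by
      simp only [min_self, max_self, Set.Icc_self, Set.mem_singleton_iff] at hz
      rw [hz]; exact con_refl _ _⟩⟩
  · exact ⟨β'.1, β'.2, F, hF⟩

private theorem icc_subset_union {a b c : L} :
    Set.Icc (min a c) (max a c) ⊆
      Set.Icc (min a b) (max a b) ∪ Set.Icc (min b c) (max b c) := by
  intro t ⟨h1, h2⟩
  rcases le_total t b with h | h
  · rcases min_le_iff.mp h1 with h' | h'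
    · exact Or.inl ⟨le_trans (min_le_left a b) h', le_trans h (le_max_right a b)⟩
    · exact Or.inr ⟨le_trans (min_le_right b c) h', le_trans h (le_max_left b c)⟩
  · rcases le_max_iff.mp h2 with h' | h'
    · exact Or.inl ⟨le_trans (min_le_right a b) h, le_trans h' (le_max_left a b)⟩
    · exact Or.inr ⟨le_trans (min_le_left b c) h, le_trans h' (le_max_right b c)⟩

theorem con_trans {β : Ordinal} {x y z : L} (h1 : con β x y) (h2 : con β y z) : con β x z := by
  rw [con] at h1 h2
  rcases h1 with h1 | ⟨β₁, F₁, hF₁⟩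
  · subst h1; rw [con]; exact h2
  rcases h2 with h2 | ⟨β₂, F₂, hF₂⟩
  · subst h2; exact con_of_cover β₁.2 F₁ hF₁
  refine con_of_cover (β := β) (β' := max β₁.1 β₂.1) (max_lt β₁.2 β₂.2) (F₁ ∪ F₂) ?_
  intro t ht
  rcases icc_subset_union (b := y) ht with h | h
  · obtain ⟨w, hw, hcw⟩ := hF₁ t h
    exact ⟨w, Finset.mem_union_left _ hw, con_mono (le_max_left _ _) hcw⟩
  · obtain ⟨w, hw, hcw⟩ := hF₂ t h
    exact ⟨w, Finset.mem_union_right _ hw, con_mono (le_max_right _ _) hcw⟩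

theorem con_convex {β : Ordinal} {x y z : L} (h : con β x y)
    (hz : z ∈ Set.Icc (min x y) (max x y)) : con β x z := by
  rw [con] at h
  rcases h with h | ⟨β', F, hF⟩
  · subst h; simp only [min_self, max_self, Set.Icc_self, Set.mem_singleton_iff] at hz
    rw [hz]; exact con_refl _ _
  refine con_of_cover β'.2 F ?_
  intro t ht
  rcases ht with ⟨h1, h2⟩
  rcases hz with ⟨hz1, hz2⟩
  exact hF t ⟨le_trans (le_min (min_le_left x y) hz1) h1,
    le_trans h2 (max_le (le_max_left x y) hz2)⟩


theorem con_pos {β : Ordinal} {x y : L} (h : con β x y) (hne : x ≠ y) : 0 < β := by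
  rw [con] at h
  rcases h with h | ⟨β', _, _⟩
  · exact absurd h hne
  · exact lt_of_le_of_lt zero_le β'.2

/-- Order embeddings reflect the condensation relation. -/
theorem con_reflect (f : L ↪o M) (β : Ordinal) :
    ∀ x y : L, con β (f x) (f y) → con β x y := by
  induction β using Ordinal.induction with
  | _ β IH =>
  classical
  intro x y h
  rcases eq_or_ne x y with rfl | hne
  · exact con_refl _ _
  have hne' : f x ≠ f y := fun e => hne (f.injective e)
  obtain ⟨β', hβ', F, hF⟩ := exists_cover_of_con (con_pos h hne') h
  refine con_of_cover hβ'
    (F.image (fun w => if h : ∃ u ∈ Set.Icc (min x y) (max x y), con β' (f u) w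
      then h.choose else x)) ?_
  intro z hz
  have hz' : f z ∈ Set.Icc (min (f x) (f y)) (max (f x) (f y)) := by
    rw [← f.monotone.map_min, ← f.monotone.map_max]
    exact ⟨f.monotone hz.1, f.monotone hz.2⟩
  obtain ⟨w, hw, hcw⟩ := hF (f z) hz'
  have hex : ∃ u ∈ Set.Icc (min x y) (max x y), con β' (f u) w := ⟨z, hz, hcw⟩
  refine ⟨_, Finset.mem_image_of_mem _ hw, ?_⟩
  simp only [dif_pos hex]
  exact IH β' hβ' z hex.choose (con_trans hcw (con_symm hex.choose_spec.2))

section LexTool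

variable {α : Type} [LinearOrder α]

private theorem lex_lt_def {x y : Lex (α →₀ ℤ)} :
    x < y ↔ ∃ j, (∀ d, d < j → ofLex x d = ofLex y d) ∧ ofLex x j < ofLex y j :=
  Iff.rfl

private theorem apply_ne_iff {x y : Lex (α →₀ ℤ)} {d : α} :
    ofLex x d ≠ ofLex y d ↔ d ∈ (ofLex x - ofLex y).support := by
  rw [Finsupp.mem_support_iff, Finsupp.sub_apply, sub_ne_zero]

/-- The most significant (smallest) coordinate where `x` and `y` differ. -/
def mdiff (x y : Lex (α →₀ ℤ)) (h : x ≠ y) : α :=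
  ((ofLex x - ofLex y).support).min' (by
    rw [Finsupp.support_nonempty_iff, sub_ne_zero]
    exact fun e => h (ofLex.injective e))

theorem mdiff_agree {x y : Lex (α →₀ ℤ)} (h : x ≠ y) {d : α} (hd : d < mdiff x y h) :
    ofLex x d = ofLex y d := by
  by_contra hne
  exact absurd (Finset.min'_le _ _ (apply_ne_iff.mp hne)) (not_le.mpr hd)

theorem mdiff_ne {x y : Lex (α →₀ ℤ)} (h : x ≠ y) :
    ofLex x (mdiff x y h) ≠ ofLex y (mdiff x y h) :=
  apply_ne_iff.mpr (Finset.min'_mem _ _)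

theorem lt_iff_mdiff {x y : Lex (α →₀ ℤ)} (h : x ≠ y) :
    x < y ↔ ofLex x (mdiff x y h) < ofLex y (mdiff x y h) := by
  constructor
  · intro hlt
    obtain ⟨j, hj, hjlt⟩ := lex_lt_def.mp hlt
    rcases lt_trichotomy j (mdiff x y h) with hc | hc | hc
    · exact absurd (mdiff_agree h hc) (ne_of_lt hjlt)
    · rwa [hc] at hjlt
    · exact absurd (hj _ hc) (mdiff_ne h)
  · intro hlt
    exact lex_lt_def.mpr ⟨mdiff x y h, fun d hd => mdiff_agree h hd, hlt⟩

theorem le_apply_of_agree {x y : Lex (α →₀ ℤ)} (hle : x ≤ y) {δ : α}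
    (hag : ∀ ρ < δ, ofLex x ρ = ofLex y ρ) : ofLex x δ ≤ ofLex y δ := by
  rcases hle.lt_or_eq with hlt | rfl
  · have hne := ne_of_lt hlt
    rcases lt_trichotomy δ (mdiff x y hne) with hc | hc | hc
    · exact le_of_eq (mdiff_agree hne hc)
    · subst hc; exact ((lt_iff_mdiff hne).mp hlt).le
    · exact absurd (hag _ hc) (mdiff_ne hne)
  · exact le_rfl

theorem sandwich {x z y : Lex (α →₀ ℤ)} (hxz : x ≤ z) (hzy : z ≤ y) {δ : α}
    (hag : ∀ ρ < δ, ofLex x ρ = ofLex y ρ) :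
    (∀ ρ < δ, ofLex z ρ = ofLex x ρ) ∧ ofLex x δ ≤ ofLex z δ ∧ ofLex z δ ≤ ofLex y δ := by
  have key : ∀ ρ < δ, ofLex z ρ = ofLex x ρ := by
    rcases eq_or_ne x z with rfl | hne
    · exact fun ρ _ => rfl
    have hδm : δ ≤ mdiff x z hne := by
      by_contra h'
      push_neg at h'
      have h2 : ofLex x (mdiff x z hne) < ofLex z (mdiff x z hne) :=
        (lt_iff_mdiff hne).mp (hxz.lt_of_ne hne)
      have h3 : ofLex z (mdiff x z hne) ≤ ofLex y (mdiff x z hne) :=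
        le_apply_of_agree hzy (fun ρ hρ =>
          (mdiff_agree hne hρ).symm.trans (hag ρ (hρ.trans h')))
      exact absurd (h3.trans_eq (hag _ h').symm) (not_le.mpr h2)
    exact fun ρ hρ => (mdiff_agree hne (lt_of_lt_of_le hρ hδm)).symm
  exact ⟨key, le_apply_of_agree hxz (fun ρ hρ => (key ρ hρ).symm),
    le_apply_of_agree hzy (fun ρ hρ => (key ρ hρ).trans (hag ρ hρ))⟩

theorem Finsupp.lt_of_forall_lt_of_lt (x y : Lex (α →₀ ℤ)) (i : α)
    (h1 : ∀ j < i, ofLex x j = ofLex y j) (h2 : ofLex x i < ofLex y i) : x < y :=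
  lex_lt_def.mpr ⟨i, h1, h2⟩

end LexTool

/-- All pairs in `ℤ^γ` are `con γ`-related. -/
theorem con_univ (γ : Ordinal.{0}) (x y : Lex ((γ.ToType)ᵒᵈ →₀ ℤ)) : con γ x y := by
  classical
  letI : IsWellOrder γ.ToType (· < ·) := isWellOrder_lt
  set rk : (γ.ToType)ᵒᵈ → Ordinal :=
    fun δ => Ordinal.typein (α := γ.ToType) (· < ·) (OrderDual.ofDual δ) with hrk
  have hrkmono : ∀ δ δ' : (γ.ToType)ᵒᵈ, δ < δ' → rk δ' < rk δ := by
    intro δ δ' h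
    exact (Ordinal.typein_lt_typein ((· < ·) : γ.ToType → γ.ToType → Prop)).mpr h
  have claim : ∀ (o : Ordinal) (x y : Lex ((γ.ToType)ᵒᵈ →₀ ℤ)), x ≤ y →
      (∀ δ, ofLex x δ ≠ ofLex y δ → rk δ < o) → con o x y := by
    intro o
    induction o using Ordinal.induction with
    | _ o IH =>
    intro x y hxy hd
    rcases hxy.lt_or_eq with hlt | rfl
    · have hne := ne_of_lt hlt
      set m := mdiff x y hne with hm
      have hr : rk m < o := hd m (mdiff_ne hne)
      refine con_of_cover hr ((Finset.Icc (ofLex x m) (ofLex y m)).image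
        (fun j => if h : ∃ z ∈ Set.Icc x y, ofLex z m = j then h.choose else x)) ?_
      intro z hz
      rw [min_eq_left hxy, max_eq_right hxy] at hz
      obtain ⟨hzag, hz1, hz2⟩ := sandwich hz.1 hz.2 (fun ρ hρ => mdiff_agree hne hρ)
      have hex : ∃ z' ∈ Set.Icc x y, ofLex z' m = ofLex z m := ⟨z, hz, rfl⟩
      refine ⟨_, Finset.mem_image_of_mem _ (Finset.mem_Icc.mpr ⟨hz1, hz2⟩), ?_⟩
      rw [dif_pos hex]
      set w := hex.choose with hwdef
      obtain ⟨hwmem, hwm⟩ := hex.choose_spec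
      obtain ⟨hwag, _, _⟩ := sandwich hwmem.1 hwmem.2 (fun ρ hρ => mdiff_agree hne hρ)
      have hzw : ∀ δ, ofLex z δ ≠ ofLex w δ → rk δ < rk m := by
        intro δ hδ
        rcases lt_trichotomy δ m with hc | hc | hc
        · exact absurd ((hzag δ hc).trans (hwag δ hc).symm) hδ
        · subst hc; exact absurd hwm.symm hδ
        · exact hrkmono m δ hc
      rcases le_total z w with h' | h'
      · exact IH _ hr z w h' (fun δ hδ => hzw δ hδ)
      · exact con_symm (IH _ hr w z h' (fun δ hδ => hzw δ (Ne.symm hδ)))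
    · exact con_refl _ _
  have hfin : ∀ (x y : Lex ((γ.ToType)ᵒᵈ →₀ ℤ)), x ≤ y → con γ x y := by
    intro x y h
    refine claim γ x y h (fun δ _ => ?_)
    have := Ordinal.typein_lt_type (α := γ.ToType) (· < ·) (OrderDual.ofDual δ)
    rwa [Ordinal.type_toType] at this
  rcases le_total x y with h | h
  · exact hfin x y h
  · exact con_symm (hfin y x h)

section SigmaCon

variable {K K' : Type} [LinearOrder K] [LinearOrder K'] {P : K → Set K'}

private theorem pk_mono {p q : Lex ((k : K) × ↥(P k))} (h : p ≤ q) : p.1 ≤ q.1 := by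
  rcases Sigma.Lex.le_def.mp h with h' | ⟨h', _⟩
  · exact le_of_lt h'
  · exact le_of_eq h'

private theorem pb_mono (hmono : ∀ k₀ k₁ : K, k₀ < k₁ → ∀ a ∈ P k₀, ∀ b ∈ P k₁, a ≤ b)
    {p q : Lex ((k : K) × ↥(P k))} (h : p ≤ q) : (p.2 : K') ≤ (q.2 : K') := by
  rcases Sigma.Lex.le_def.mp h with h' | ⟨h', h''⟩
  · exact hmono p.1 q.1 h' _ p.2.2 _ q.2.2
  · rcases p with ⟨k, b⟩
    rcases q with ⟨k', b'⟩
    dsimp at h'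
    subst h'
    exact Subtype.coe_le_coe.mpr h''

private theorem sigma_ext {p q : Lex ((k : K) × ↥(P k))} (h1 : p.1 = q.1)
    (h2 : (p.2 : K') = (q.2 : K')) : p = q := by
  rcases p with ⟨k, b⟩
  rcases q with ⟨k', b'⟩
  dsimp at h1
  subst h1
  rw [show b = b' from Subtype.ext h2]

theorem con_sigma (hmono : ∀ k₀ k₁ : K, k₀ < k₁ → ∀ a ∈ P k₀, ∀ b ∈ P k₁, a ≤ b)
    (β : Ordinal) : ∀ p q : Lex ((k : K) × ↥(P k)),
    con β p.1 q.1 → con β (p.2 : K') (q.2 : K') → con β p q := by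
  induction β using Ordinal.induction with
  | _ β IH =>
  classical
  intro p q h1 h2
  rcases eq_or_ne p q with rfl | hne
  · exact con_refl _ _
  have hpos : 0 < β := by
    rcases ne_or_eq p.1 q.1 with h' | h'
    · exact con_pos h1 h'
    · exact con_pos h2 (fun h'' => hne (sigma_ext h' h''))
  obtain ⟨β₁, hβ₁, F₁, hF₁⟩ := exists_cover_of_con hpos h1
  obtain ⟨β₂, hβ₂, F₂, hF₂⟩ := exists_cover_of_con hpos h2
  have hβ' : max β₁ β₂ < β := max_lt hβ₁ hβ₂
  have hkm : Monotone (fun p : Lex ((k : K) × ↥(P k)) => p.1) := fun _ _ h => pk_mono h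
  have hbm : Monotone (fun p : Lex ((k : K) × ↥(P k)) => (p.2 : K')) :=
    fun _ _ h => pb_mono hmono h
  refine con_of_cover hβ' ((F₁ ×ˢ F₂).image
    (fun w => if h : ∃ r ∈ Set.Icc (min p q) (max p q),
        con (max β₁ β₂) r.1 w.1 ∧ con (max β₁ β₂) (r.2 : K') w.2
      then h.choose else p)) ?_
  intro z hz
  have hzk : z.1 ∈ Set.Icc (min p.1 q.1) (max p.1 q.1) := by
    constructor
    · rw [← hkm.map_min]; exact hkm hz.1
    · rw [← hkm.map_max]; exact hkm hz.2
  have hzb : (z.2 : K') ∈ Set.Icc (min (p.2 : K') (q.2 : K')) (max (p.2 : K') (q.2 : K')) := by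
    constructor
    · rw [← hbm.map_min]; exact hbm hz.1
    · rw [← hbm.map_max]; exact hbm hz.2
  obtain ⟨w₁, hw₁, hc₁⟩ := hF₁ z.1 hzk
  obtain ⟨w₂, hw₂, hc₂⟩ := hF₂ (z.2 : K') hzb
  have hc₁' := con_mono (le_max_left β₁ β₂) hc₁
  have hc₂' := con_mono (le_max_right β₁ β₂) hc₂
  have hex : ∃ r ∈ Set.Icc (min p q) (max p q),
      con (max β₁ β₂) r.1 w₁ ∧ con (max β₁ β₂) (r.2 : K') w₂ := ⟨z, hz, hc₁', hc₂'⟩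
  refine ⟨_, Finset.mem_image_of_mem _ (show (w₁, w₂) ∈ F₁ ×ˢ F₂ from Finset.mem_product.mpr ⟨hw₁, hw₂⟩), ?_⟩
  simp only [dif_pos hex]
  obtain ⟨hrmem, hr1, hr2⟩ := hex.choose_spec
  exact IH _ hβ' z hex.choose (con_trans hc₁' (con_symm hr1)) (con_trans hc₂' (con_symm hr2))

end SigmaCon

/-- A linear order all of whose closed intervals are finite embeds into `ℤ`. -/
theorem emb_int_of_finite_icc {T : Type} [LinearOrder T]
    (hf : ∀ a b : T, (Set.Icc a b).Finite) : Nonempty (T ↪o ℤ) := by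
  classical
  rcases isEmpty_or_nonempty T with hT | hT
  · exact ⟨OrderEmbedding.ofIsEmpty⟩
  obtain ⟨x₀⟩ := hT
  have hIoc : ∀ a b : T, (Set.Ioc a b).Finite := fun a b =>
    (hf a b).subset Set.Ioc_subset_Icc_self
  set g : T → ℤ := fun x =>
    ((hIoc x₀ x).toFinset.card : ℤ) - ((hIoc x x₀).toFinset.card : ℤ) with hg
  have hmono : StrictMono g := by
    intro x y hxy
    rcases le_total x₀ x with h | h
    · have e1 : Set.Ioc x x₀ = ∅ := Set.Ioc_eq_empty (not_lt.mpr h)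
      have e2 : Set.Ioc y x₀ = ∅ := Set.Ioc_eq_empty (not_lt.mpr (h.trans hxy.le))
      have hss : (hIoc x₀ x).toFinset ⊂ (hIoc x₀ y).toFinset := by
        rw [Set.Finite.toFinset_ssubset_toFinset]
        constructor
        · exact Set.Ioc_subset_Ioc_right hxy.le
        · exact fun hsub => absurd (hsub ⟨h.trans_lt hxy, le_rfl⟩).2 (not_le.mpr hxy)
      have := Finset.card_lt_card hss
      simp only [hg, Set.Finite.toFinset_eq_empty.mpr e1, Set.Finite.toFinset_eq_empty.mpr e2,
        Finset.card_empty]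
      omega
    · rcases le_total y x₀ with h' | h'
      · have e1 : Set.Ioc x₀ x = ∅ := Set.Ioc_eq_empty (not_lt.mpr ((hxy.le.trans h')))
        have e2 : Set.Ioc x₀ y = ∅ := Set.Ioc_eq_empty (not_lt.mpr h')
        have hss : (hIoc y x₀).toFinset ⊂ (hIoc x x₀).toFinset := by
          rw [Set.Finite.toFinset_ssubset_toFinset]
          constructor
          · exact Set.Ioc_subset_Ioc_left hxy.le
          · exact fun hsub => absurd (hsub ⟨hxy, h'⟩).1 (lt_irrefl y)
        have := Finset.card_lt_card hss
        simp only [hg, Set.Finite.toFinset_eq_empty.mpr e1, Set.Finite.toFinset_eq_empty.mpr e2,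
          Finset.card_empty]
        omega
      · have e1 : Set.Ioc x₀ x = ∅ := Set.Ioc_eq_empty (not_lt.mpr h)
        have e2 : Set.Ioc y x₀ = ∅ := Set.Ioc_eq_empty (not_lt.mpr h')
        have hpos : 0 < (hIoc x x₀).toFinset.card ∨ 0 < (hIoc x₀ y).toFinset.card := by
          rcases lt_or_eq_of_le h with hc | hc
          · refine Or.inl (Finset.card_pos.mpr ⟨x₀, ?_⟩)
            rw [Set.Finite.mem_toFinset]
            exact ⟨hc, le_rfl⟩
          · refine Or.inr (Finset.card_pos.mpr ⟨y, ?_⟩)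
            rw [Set.Finite.mem_toFinset]
            exact ⟨hc ▸ hxy, le_rfl⟩
        simp only [hg, Set.Finite.toFinset_eq_empty.mpr e1, Set.Finite.toFinset_eq_empty.mpr e2,
          Finset.card_empty]
        omega
  exact ⟨OrderEmbedding.ofStrictMono g hmono⟩

section Pack

variable {α σ : Type} [LinearOrder α] [LinearOrder σ]

/-- A marker value at coordinate `m` plus a finsupp pushed to less significant coordinates. -/
def pack (m : α) (s : ℤ) (ι : σ ↪o α) (f : Lex (σ →₀ ℤ)) : Lex (α →₀ ℤ) :=
  toLex (Finsupp.single m s + Finsupp.embDomain ι.toEmbedding (ofLex f))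

theorem pack_apply_lt {m : α} {ι : σ ↪o α} (hm : ∀ t, m < ι t) {s : ℤ} {f : Lex (σ →₀ ℤ)}
    {j : α} (hj : j < m) : ofLex (pack m s ι f) j = 0 := by
  have h1 : Finsupp.single m s j = 0 := Finsupp.single_eq_of_ne' (ne_of_gt hj)
  have h2 : Finsupp.embDomain ι.toEmbedding (ofLex f) j = 0 := by
    apply Finsupp.embDomain_notin_range
    rintro ⟨t, rfl⟩
    exact absurd (hj.trans (hm t)) (lt_irrefl _)
  show Finsupp.single m s j + Finsupp.embDomain ι.toEmbedding (ofLex f) j = 0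
  rw [h1, h2, add_zero]

theorem pack_apply_self {m : α} {ι : σ ↪o α} (hm : ∀ t, m < ι t) {s : ℤ} {f : Lex (σ →₀ ℤ)} :
    ofLex (pack m s ι f) m = s := by
  have h2 : Finsupp.embDomain ι.toEmbedding (ofLex f) m = 0 := by
    apply Finsupp.embDomain_notin_range
    rintro ⟨t, rfl⟩
    exact absurd (hm t) (lt_irrefl _)
  show Finsupp.single m s m + Finsupp.embDomain ι.toEmbedding (ofLex f) m = s
  rw [h2, Finsupp.single_eq_same, add_zero]

theorem lt_of_top {u v : Lex (α →₀ ℤ)} (m : α) (hu : ∀ j ≤ m, ofLex u j = 0)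
    (hv : ∀ j < m, ofLex v j = 0) (hpos : 0 < ofLex v m) : u < v :=
  Finsupp.lt_of_forall_lt_of_lt u v m
    (fun j hj => (hu j hj.le).trans (hv j hj).symm)
    (by rw [hu m le_rfl]; exact hpos)

theorem lt_of_top' {u v : Lex (α →₀ ℤ)} (m : α) (hu : ∀ j ≤ m, ofLex u j = 0)
    (hv : ∀ j < m, ofLex v j = 0) (hneg : ofLex v m < 0) : v < u :=
  Finsupp.lt_of_forall_lt_of_lt v u m
    (fun j hj => (hv j hj).trans (hu j hj.le).symm)
    (by rw [hu m le_rfl]; exact hneg)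

theorem pack_lt_pack_right {m : α} {ι : σ ↪o α} {s : ℤ} {f g : Lex (σ →₀ ℤ)}
    (h : f < g) : pack m s ι f < pack m s ι g := by
  have hfg : f ≠ g := ne_of_lt h
  refine Finsupp.lt_of_forall_lt_of_lt _ _ (ι (mdiff f g hfg)) ?_ ?_
  · intro j hj
    show Finsupp.single m s j + Finsupp.embDomain ι.toEmbedding (ofLex f) j =
      Finsupp.single m s j + Finsupp.embDomain ι.toEmbedding (ofLex g) j
    congr 1
    by_cases hr : ∃ t, ι t = j
    · obtain ⟨t, rfl⟩ := hr
      erw [Finsupp.embDomain_apply_self, Finsupp.embDomain_apply_self]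
      exact mdiff_agree hfg (ι.lt_iff_lt.mp hj)
    · rw [Finsupp.embDomain_notin_range, Finsupp.embDomain_notin_range]
      · rintro ⟨t, ht⟩; exact hr ⟨t, ht⟩
      · rintro ⟨t, ht⟩; exact hr ⟨t, ht⟩
  · show Finsupp.single m s _ + Finsupp.embDomain ι.toEmbedding (ofLex f) _ <
      Finsupp.single m s _ + Finsupp.embDomain ι.toEmbedding (ofLex g) _
    erw [Finsupp.embDomain_apply_self, Finsupp.embDomain_apply_self]
    exact add_lt_add_right ((lt_iff_mdiff hfg).mp h) _

theorem pack_lt_pack_marker {m : α} {ι : σ ↪o α} (hm : ∀ t, m < ι t) {s₁ s₂ : ℤ}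
    {f g : Lex (σ →₀ ℤ)} (h : s₁ < s₂) : pack m s₁ ι f < pack m s₂ ι g := by
  refine Finsupp.lt_of_forall_lt_of_lt _ _ m ?_ ?_
  · intro j hj
    rw [pack_apply_lt hm hj, pack_apply_lt hm hj]
  · rw [pack_apply_self hm, pack_apply_self hm]
    exact h

end Pack

theorem con_zero {x y : L} (h : con 0 x y) : x = y := by
  rw [con] at h
  rcases h with h | ⟨β', _, _⟩
  · exact h
  · exact absurd (Set.mem_Iio.mp β'.2) (not_lt_of_ge zero_le)

theorem con_lt_of_lt {β : Ordinal} {x y x' y' : L} (hxy : x < y) (hc : ¬con β x y)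
    (hx : con β x x') (hy : con β y y') : x' < y' := by
  by_contra hcon
  push_neg at hcon
  have hxy' : x < y' := by
    by_contra h'
    push_neg at h'
    have h1 : con β y' y := con_symm hy
    have h2 : con β y' x := con_convex h1 (by
      constructor
      · exact le_trans (min_le_left _ _) h'
      · exact le_trans hxy.le (le_max_right y' y))
    exact hc (con_trans (con_symm h2) h1)
  have h3 : con β x y' := con_convex hx (by
    constructor
    · exact le_trans (min_le_left x x') hxy'.le
    · exact le_trans hcon (le_max_right x x'))
  exact hc (con_trans h3 (con_symm hy))

theorem exists_marker (β γ : Ordinal.{0}) (h : β < γ) :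
    ∃ ι : ((β.ToType)ᵒᵈ) ↪o ((γ.ToType)ᵒᵈ),
      ∀ t, OrderDual.toDual (((Ordinal.ToType.mk (o := γ))) ⟨β, h⟩) < ι t := by
  set e1 := (Ordinal.ToType.mk (o := β)).symm
  set e2 := (Ordinal.ToType.mk (o := γ))
  set ι₀ : β.ToType → γ.ToType := fun t => e2 ⟨(e1 t).1, Set.mem_Iio.mpr (lt_trans (Set.mem_Iio.mp (e1 t).2) h)⟩
  have hmono : StrictMono ι₀ := by
    intro a b hab
    exact e2.lt_iff_lt.mpr (Subtype.mk_lt_mk.mpr (Subtype.coe_lt_coe.mpr (e1.lt_iff_lt.mpr hab)))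
  have hbnd : ∀ t, ι₀ t < e2 ⟨β, h⟩ := fun t =>
    e2.lt_iff_lt.mpr (Subtype.mk_lt_mk.mpr (Set.mem_Iio.mp (e1 t).2))
  refine ⟨OrderEmbedding.ofStrictMono (fun t => OrderDual.toDual (ι₀ (OrderDual.ofDual t)))
    (fun a b hab => OrderDual.toDual_lt_toDual.mpr (hmono hab)), fun t => ?_⟩
  exact OrderDual.toDual_lt_toDual.mpr (hbnd (OrderDual.ofDual t))

/-- Main construction: a countable linear order on which `con γ` is trivial embeds into `ℤ^γ`. -/
theorem emb_of_con : ∀ (γ : Ordinal.{0}) (L : Type) [LinearOrder L] [Countable L],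
    (∀ x y : L, con γ x y) → Nonempty (L ↪o Lex ((γ.ToType)ᵒᵈ →₀ ℤ)) := by
  intro γ
  induction γ using Ordinal.limitRecOn with
  | zero =>
    intro L _ _ hcon
    refine ⟨OrderEmbedding.ofStrictMono (fun _ => toLex 0) ?_⟩
    intro x y hxy
    exact absurd hxy ((con_zero (hcon x y)) ▸ lt_irrefl x)
  | add_one β IH =>
    rw [Ordinal.add_one_eq_succ]
    intro L _ _ hcon
    classical
    -- the β-condensation classes
    let S : Setoid L := ⟨con β,
      ⟨fun x => con_refl β x, fun h => con_symm h, fun h h' => con_trans h h'⟩⟩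
    let rep : L → L := fun x => (Quotient.mk S x).out
    have hrep1 : ∀ x, con β (rep x) x := by
      intro x
      have h : Quotient.mk S (rep x) = Quotient.mk S x := Quotient.out_eq _
      exact Quotient.exact h
    have hrep2 : ∀ x y, con β x y → rep x = rep y := fun x y h =>
      congrArg Quotient.out (Quotient.sound h)
    have hidem : ∀ x, rep (rep x) = rep x := fun x => hrep2 _ _ (hrep1 x)
    -- any interval is covered by finitely many β-classes
    have hcov : ∀ u v : L, ∃ F : Finset L,
        ∀ z ∈ Set.Icc (min u v) (max u v), ∃ w ∈ F, con β z w := by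
      intro u v
      obtain ⟨β', hβ', F, hF⟩ := exists_cover_of_con
        (lt_of_le_of_lt zero_le (Order.lt_succ β)) (hcon u v)
      refine ⟨F, fun z hz => ?_⟩
      obtain ⟨w, hw, hc⟩ := hF z hz
      exact ⟨w, hw, con_mono (Order.lt_succ_iff.mp hβ') hc⟩
    -- the suborder of representatives has finite intervals
    have hTfin : ∀ u v : {t : L // t ∈ Set.range rep}, (Set.Icc u v).Finite := by
      intro u v
      rcases le_or_gt u v with huv | huv
      swap
      · rw [Set.Icc_eq_empty (not_le.mpr huv)]; exact Set.finite_empty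
      obtain ⟨F, hF⟩ := hcov u.val v.val
      have hmem : ∀ w : {t : L // t ∈ Set.range rep}, w ∈ Set.Icc u v →
          ∃ t ∈ F, con β w.val t := by
        intro w hw
        refine hF w.val ?_
        rw [min_eq_left (Subtype.coe_le_coe.mpr huv), max_eq_right (Subtype.coe_le_coe.mpr huv)]
        exact ⟨Subtype.coe_le_coe.mpr hw.1, Subtype.coe_le_coe.mpr hw.2⟩
      set pick : {t : L // t ∈ Set.range rep} → L :=
        fun w => if h : ∃ t ∈ F, con β w.val t then h.choose else w.val with hpick
      have hrepfix : ∀ w : {t : L // t ∈ Set.range rep}, rep w.val = w.val := by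
        rintro ⟨_, z, rfl⟩
        exact hidem z
      apply Set.Finite.of_finite_image (f := pick)
      · apply F.finite_toSet.subset
        rintro _ ⟨w, hw, rfl⟩
        have h := hmem w hw
        simp only [hpick, dif_pos h]
        exact h.choose_spec.1
      · intro w₁ hw₁ w₂ hw₂ heq
        have h1 := hmem w₁ hw₁
        have h2 := hmem w₂ hw₂
        simp only [hpick, dif_pos h1, dif_pos h2] at heq
        have hc : con β w₁.val w₂.val :=
          con_trans h1.choose_spec.2 (heq ▸ con_symm h2.choose_spec.2)
        have := hrep2 _ _ hc
        rw [hrepfix w₁, hrepfix w₂] at this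
        exact Subtype.ext this
    obtain ⟨gT⟩ := emb_int_of_finite_icc hTfin
    -- embeddings of each class
    have hclsE : ∀ r : L, Nonempty ({z : L // con β r z} ↪o Lex ((β.ToType)ᵒᵈ →₀ ℤ)) := by
      intro r
      apply IH
      intro x y
      exact con_reflect (OrderEmbedding.subtype _) β x y (con_trans (con_symm x.2) y.2)
    set E : ∀ r : L, {z : L // con β r z} ↪o Lex ((β.ToType)ᵒᵈ →₀ ℤ) :=
      fun r => (hclsE r).some with hE
    obtain ⟨ι, hι⟩ := exists_marker β (Order.succ β) (Order.lt_succ β)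
    set m := OrderDual.toDual ((Ordinal.ToType.mk (o := Order.succ β)) ⟨β, Order.lt_succ β⟩)
    refine ⟨OrderEmbedding.ofStrictMono
      (fun x => pack m (gT ⟨rep x, ⟨x, rfl⟩⟩) ι (E (rep x) ⟨x, hrep1 x⟩)) ?_⟩
    intro x y hxy
    by_cases hc : con β x y
    · have e := hrep2 x y hc
      have key : ∀ (r₁ r₂ : L) (h12 : r₁ = r₂) (hx1 : con β r₁ x) (hy2 : con β r₂ y)
          (m₁ : r₁ ∈ Set.range rep) (m₂ : r₂ ∈ Set.range rep),
          pack m (gT ⟨r₁, m₁⟩) ι (E r₁ ⟨x, hx1⟩) < pack m (gT ⟨r₂, m₂⟩) ι (E r₂ ⟨y, hy2⟩) := by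
        intro r₁ r₂ h12 hx1 hy2 m₁ m₂
        subst h12
        exact pack_lt_pack_right ((E r₁).lt_iff_lt.mpr (Subtype.mk_lt_mk.mpr hxy))
      exact key (rep x) (rep y) e (hrep1 x) (hrep1 y) ⟨x, rfl⟩ ⟨y, rfl⟩
    · have hrlt : rep x < rep y :=
        con_lt_of_lt hxy hc (con_symm (hrep1 x)) (con_symm (hrep1 y))
      exact pack_lt_pack_marker hι (gT.lt_iff_lt.mpr (Subtype.mk_lt_mk.mpr hrlt))
  | limit γ hγlim IH =>
    intro L _ _ hcon
    classical
    rcases isEmpty_or_nonempty L with hL | hL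
    · exact ⟨OrderEmbedding.ofIsEmpty⟩
    haveI := hL
    obtain ⟨z₀⟩ := hL
    obtain ⟨u, hu⟩ := exists_surjective_nat L
    have hex : ∀ x : L, ∃ β', β' < γ ∧ con β' x z₀ := by
      intro x
      rcases eq_or_ne x z₀ with rfl | hne
      · exact ⟨0, hγlim.pos, con_refl _ _⟩
      · obtain ⟨β', hβ', F, hF⟩ := exists_cover_of_con hγlim.pos (hcon x z₀)
        exact ⟨Order.succ β', hγlim.succ_lt hβ', con_of_cover (Order.lt_succ β') F hF⟩
    set b : L → Ordinal := fun x => (hex x).choose with hbdef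
    have hb : ∀ x, b x < γ ∧ con (b x) x z₀ := fun x => (hex x).choose_spec
    set βs : ℕ → Ordinal := fun n => Nat.rec (b (u 0))
      (fun k prev => max (Order.succ prev) (b (u (k + 1)))) n with hβsdef
    have hβsS : ∀ n, βs (n + 1) = max (Order.succ (βs n)) (b (u (n + 1))) := fun n => rfl
    have hβslt : ∀ n, βs n < γ := by
      intro n
      induction n with
      | zero => exact (hb (u 0)).1
      | succ n ih =>
        rw [hβsS]
        exact max_lt (hγlim.succ_lt ih) (hb _).1
    have hβsmono : StrictMono βs := by
      apply strictMono_nat_of_lt_succ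
      intro n
      rw [hβsS]
      exact lt_of_lt_of_le (Order.lt_succ _) (le_max_left _ _)
    have hβscov : ∀ n, con (βs n) (u n) z₀ := by
      intro n
      cases n with
      | zero => exact (hb (u 0)).2
      | succ n =>
        rw [hβsS]
        exact con_mono (le_max_right _ _) (hb (u (n + 1))).2
    have hexn : ∀ x : L, ∃ n, con (βs n) x z₀ := by
      intro x
      obtain ⟨n, rfl⟩ := hu x
      exact ⟨n, hβscov n⟩
    set nx : L → ℕ := fun x => Nat.find (hexn x) with hnxdef
    have hnx : ∀ x, con (βs (nx x)) x z₀ := fun x => Nat.find_spec (hexn x)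
    have hnmin : ∀ (x : L) (k : ℕ), k < nx x → ¬con (βs k) x z₀ :=
      fun x k hk => Nat.find_min (hexn x) hk
    -- per-level embeddings
    have hCemb : ∀ n : ℕ,
        Nonempty ({z : L // con (βs n) z z₀} ↪o Lex (((βs n).ToType)ᵒᵈ →₀ ℤ)) := by
      intro n
      apply IH (βs n) (hβslt n)
      intro x y
      exact con_reflect (OrderEmbedding.subtype _) _ x y (con_trans x.2 (con_symm y.2))
    set E : ∀ n : ℕ, {z : L // con (βs n) z z₀} ↪o Lex (((βs n).ToType)ᵒᵈ →₀ ℤ) :=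
      fun n => (hCemb n).some with hEdef
    -- markers
    set m : ℕ → ((γ.ToType)ᵒᵈ) :=
      fun n => OrderDual.toDual (((Ordinal.ToType.mk (o := γ))) ⟨βs n, hβslt n⟩) with hmdef
    have hmark : ∀ n : ℕ, ∃ ι : (((βs n).ToType)ᵒᵈ) ↪o ((γ.ToType)ᵒᵈ), ∀ t, m n < ι t :=
      fun n => exists_marker (βs n) γ (hβslt n)
    set ι : ∀ n : ℕ, (((βs n).ToType)ᵒᵈ) ↪o ((γ.ToType)ᵒᵈ) :=
      fun n => (hmark n).choose with hιdef
    have hι : ∀ n t, m n < ι n t := fun n => (hmark n).choose_spec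
    have hmlt : ∀ n n' : ℕ, n < n' → m n' < m n := by
      intro n n' h
      exact OrderDual.toDual_lt_toDual.mpr
        (((Ordinal.ToType.mk (o := γ))).lt_iff_lt.mpr (Subtype.mk_lt_mk.mpr (hβsmono h)))
    set sgn : L → ℤ := fun x => if nx x = 0 then 0 else if z₀ < x then 1 else -1 with hsgndef
    refine ⟨OrderEmbedding.ofStrictMono
      (fun x => pack (m (nx x)) (sgn x) (ι (nx x)) (E (nx x) ⟨x, hnx x⟩)) ?_⟩
    intro x y hxy
    rcases lt_trichotomy (nx x) (nx y) with hn | hn | hn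
    · -- x lives at a lower level than y; y must be above z₀
      have hyz : z₀ < y := by
        rcases lt_trichotomy y z₀ with h' | h' | h'
        · exfalso
          have hcx : con (βs (nx x)) x z₀ := hnx x
          have h1 : con (βs (nx x)) x y := con_convex hcx (by
            constructor
            · exact le_trans (min_le_left x z₀) hxy.le
            · exact le_trans h'.le (le_max_right x z₀))
          exact hnmin y (nx x) hn (con_trans (con_symm h1) hcx)
        · exact absurd (h' ▸ con_refl (βs (nx x)) z₀) (hnmin y (nx x) hn)
        · exact h'
      have hsy : sgn y = 1 := by
        have h0 : nx y ≠ 0 := Nat.ne_zero_of_lt hn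
        simp only [hsgndef, if_neg h0, if_pos hyz]
      apply lt_of_top (m (nx y))
      · intro j hj
        exact pack_apply_lt (hι (nx x)) (lt_of_le_of_lt hj (hmlt _ _ hn))
      · intro j hj
        exact pack_apply_lt (hι (nx y)) hj
      · rw [pack_apply_self (hι (nx y)), hsy]
        norm_num
    · -- same level
      by_cases hs : sgn x = sgn y
      · have key : ∀ (n₁ n₂ : ℕ) (e : n₁ = n₂) (hx1 : con (βs n₁) x z₀)
            (hy2 : con (βs n₂) y z₀) (s₁ s₂ : ℤ) (es : s₁ = s₂),
            pack (m n₁) s₁ (ι n₁) (E n₁ ⟨x, hx1⟩) < pack (m n₂) s₂ (ι n₂) (E n₂ ⟨y, hy2⟩) := by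
          intro n₁ n₂ e hx1 hy2 s₁ s₂ es
          subst e
          subst es
          exact pack_lt_pack_right ((E n₁).lt_iff_lt.mpr (Subtype.mk_lt_mk.mpr hxy))
        exact key _ _ hn (hnx x) (hnx y) _ _ hs
      · have hn0 : nx x ≠ 0 := by
          intro h0
          exact hs (by simp only [hsgndef, if_pos h0, if_pos (hn ▸ h0)])
        have hsx : sgn x = -1 := by
          rcases lt_or_ge z₀ x with h' | h'
          · exact absurd (by simp only [hsgndef, if_neg hn0, if_pos h',
              if_neg (hn ▸ hn0), if_pos (h'.trans hxy)]) hs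
          · simp only [hsgndef, if_neg hn0, if_neg (not_lt.mpr h')]
        have hsy : sgn y = 1 := by
          rcases lt_or_ge z₀ y with h' | h'
          · simp only [hsgndef, if_neg (hn ▸ hn0), if_pos h']
          · exact absurd (by simp only [hsgndef, if_neg hn0, if_neg (hn ▸ hn0),
              if_neg (not_lt.mpr (hxy.le.trans h')), if_neg (not_lt.mpr h')]) hs
        have hslt : sgn x < sgn y := by rw [hsx, hsy]; norm_num
        have key : ∀ (n₁ n₂ : ℕ) (e : n₁ = n₂) (hx1 : con (βs n₁) x z₀)
            (hy2 : con (βs n₂) y z₀),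
            pack (m n₁) (sgn x) (ι n₁) (E n₁ ⟨x, hx1⟩) <
              pack (m n₂) (sgn y) (ι n₂) (E n₂ ⟨y, hy2⟩) := by
          intro n₁ n₂ e hx1 hy2
          subst e
          exact pack_lt_pack_marker (hι n₁) hslt
        exact key _ _ hn (hnx x) (hnx y)
    · -- y lives at a lower level than x; x must be below z₀
      have hxz : x < z₀ := by
        rcases lt_trichotomy x z₀ with h' | h' | h'
        · exact h'
        · exact absurd (h' ▸ con_refl (βs (nx y)) z₀) (hnmin x (nx y) hn)
        · exfalso
          have hcy : con (βs (nx y)) y z₀ := hnx y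
          have h1 : con (βs (nx y)) z₀ x := con_convex (con_trans (con_refl _ z₀)
              (con_symm hcy)) (by
            constructor
            · exact le_trans (min_le_left z₀ y) h'.le
            · exact le_trans hxy.le (le_max_right z₀ y))
          exact hnmin x (nx y) hn (con_symm h1)
      have hsx : sgn x = -1 := by
        have h0 : nx x ≠ 0 := Nat.ne_zero_of_lt hn
        simp only [hsgndef, if_neg h0, if_neg (not_lt.mpr hxz.le)]
      apply lt_of_top' (m (nx x))
      · intro j hj
        exact pack_apply_lt (hι (nx y)) (lt_of_le_of_lt hj (hmlt _ _ hn))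
      · intro j hj
        exact pack_apply_lt (hι (nx x)) hj
      · rw [pack_apply_self (hι (nx x)), hsx]
        norm_num

end ZPow

/-- The class of linear orders embeddable into `ℤ^γ` (finitely supported functions `γ → ℤ`
ordered by the value at the largest index where they differ) is closed under convex sums,
for every countable ordinal `γ`. -/
theorem stmt_18 (γ : Ordinal.{0}) (hγ : γ.card ≤ Cardinal.aleph0)
    (K K' : Type) [LinearOrder K] [LinearOrder K']
    (hK : Nonempty (K ↪o Lex ((γ.ToType)ᵒᵈ →₀ ℤ)))
    (hK' : Nonempty (K' ↪o Lex ((γ.ToType)ᵒᵈ →₀ ℤ)))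
    (P : K → Set K') (hPne : ∀ k, (P k).Nonempty) (hPc : ∀ k, (P k).OrdConnected)
    (hmono : ∀ k₀ k₁ : K, k₀ < k₁ → ∀ a ∈ P k₀, ∀ b ∈ P k₁, a ≤ b) :
    Nonempty (Lex ((k : K) × ↥(P k)) ↪o Lex ((γ.ToType)ᵒᵈ →₀ ℤ)) := by
  classical
  obtain ⟨eK⟩ := hK
  obtain ⟨eK'⟩ := hK'
  haveI hτ : Countable γ.ToType := by
    have h := Cardinal.mk_toType γ
    exact Cardinal.mk_le_aleph0_iff.mp (le_of_eq_of_le h hγ)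
  haveI hτd : Countable ((γ.ToType)ᵒᵈ) := hτ
  haveI hZ : Countable (Lex ((γ.ToType)ᵒᵈ →₀ ℤ)) :=
    Countable.of_equiv _ (toLex : ((γ.ToType)ᵒᵈ →₀ ℤ) ≃ _)
  haveI cK : Countable K := eK.injective.countable
  haveI cK' : Countable K' := eK'.injective.countable
  haveI : Countable ((k : K) × ↥(P k)) := inferInstance
  haveI : Countable (Lex ((k : K) × ↥(P k))) :=
    Countable.of_equiv _ (toLex : ((k : K) × ↥(P k)) ≃ _)
  have hconK : ∀ x y : K, con γ x y := fun x y => con_reflect eK γ x y (con_univ γ _ _)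
  have hconK' : ∀ x y : K', con γ x y := fun x y => con_reflect eK' γ x y (con_univ γ _ _)
  have hconS : ∀ p q : Lex ((k : K) × ↥(P k)), con γ p q := fun p q =>
    con_sigma hmono γ p q (hconK _ _) (hconK' _ _)
  exact emb_of_con γ _ hconS
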